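/- The resultant with respect to x of N(x) = a^q x^3 + x^2 + b^q and D(x) = b x^3 + x + a equals (up to a power of b and a unit) a^{3q+3} − 3a^{2q+2}b^{q+1} − a^{2q+2} − a^2 b + 3a^{q+1}b^{2q+2} − a^{q+1}b^{q+1} − a^{2q}b^q − b^{3q+3} + 2b^{2q+2} − b^{q+1}. Hence if this expression vanishes, N and D share a common root in an algebraic closure. -/

import Mathlib

set_option maxRecDepth 8000
set_option maxHeartbeats 2000000

lemma key_identity {K : Type*} [CommRing K] (al be A B r1 r2 : K)
    (h1 : be * r1^3 + r1 + al = 0)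
    (h2 : be * r2^2 + be * r1 * r2 + be * r1^2 + 1 = 0) :
    (A*r1^3 + r1^2 + B) * (A*r2^3 + r2^2 + B) * (A*(-r1-r2)^3 + (-r1-r2)^2 + B) * be^3
      + (A^3*al^3 - 3*A^2*al^2*B*be - A^2*al^2 - al^2*be + 3*A*al*B^2*be^2
         - A*al*B*be - A^2*B - B^3*be^3 + 2*B^2*be^2 - B*be) = 0 := by
  linear_combination
    (-al*A^2 + al^2*A^3 - be*A*B - be*al - 3*be*al*A^2*B + 3*be^2*A*B^2 + r1*A^2 - r1*al*A^3
      + r1*be + 3*r1*be*A^2*B + r1^2*A^3 + r1^3*be*A^2 - r1^3*be*al*A^3 + r1^3*be^2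
      + 3*r1^3*be^2*A^2*B + 2*r1^4*be*A^3 + r1^6*be^2*A^3) * h1 +
    (-A^2*B - be*B + 2*be^2*B^2 + r2^2*be*A^2*B + r2^2*be^2*B - r2^4*be^2*A^2*B + r1*be*A*B
      - 3*r1*be^2*A*B^2 + r1*r2*be*A^2*B + r1*r2*be^2*B - r1*r2^2*be^2*A*B - 2*r1*r2^3*be^2*A^2*B
      - r1^2*A^2 - r1^2*be - 2*r1^2*be*A^2*B + r1^2*be^2*B - r1^2*r2*be^2*A*B + r1^2*r2^2*be*A^2
      + r1^2*r2^2*be^2 - r1^2*r2^4*be^2*A^2 - r1^3*A^3 + r1^3*r2*be*A^2 + r1^3*r2*be^2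
      + r1^3*r2*be^2*A^2*B + r1^3*r2^2*be*A^3 - 2*r1^3*r2^3*be^2*A^2 - r1^3*r2^4*be^2*A^3
      - r1^4*be*A^2 - r1^4*be^2 - 4*r1^4*be^2*A^2*B + r1^4*r2*be*A^3 - r1^4*r2^2*be^2*A^2
      - 2*r1^4*r2^3*be^2*A^3 - 2*r1^5*be*A^3 + r1^6*r2*be^2*A^3 - r1^7*be^2*A^3) * h2

lemma cubic_root {K : Type*} [Field K] [IsAlgClosed K] (b c : K) (hb : b ≠ 0) :
    ∃ x : K, b * x^3 + x + c = 0 := by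
  obtain ⟨x, hx⟩ := IsAlgClosed.exists_root (k := K)
    (Polynomial.C b * Polynomial.X ^ 3 + Polynomial.X + Polynomial.C c) (by
      have : (Polynomial.C b * Polynomial.X ^ 3 + Polynomial.X + Polynomial.C c).degree = 3 := by
        compute_degree!
      simp [this])
  exact ⟨x, by simpa using hx⟩

lemma quad_root {K : Type*} [Field K] [IsAlgClosed K] (b c d : K) (hb : b ≠ 0) :
    ∃ x : K, b * x^2 + c * x + d = 0 := by
  obtain ⟨x, hx⟩ := IsAlgClosed.exists_root (k := K)
    (Polynomial.C b * Polynomial.X ^ 2 + Polynomial.C c * Polynomial.X + Polynomial.C d) (by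
      have : (Polynomial.C b * Polynomial.X ^ 2 + Polynomial.C c * Polynomial.X
          + Polynomial.C d).degree = 2 := by
        compute_degree!
      simp [this])
  exact ⟨x, by simpa using hx⟩

/-- The resultant (Sylvester determinant) of `N(x) = a^q x^3 + x^2 + b^q` and
`D(x) = b x^3 + x + a` equals, up to a power of `b` and a unit,
`a^{3q+3} - 3a^{2q+2}b^{q+1} - a^{2q+2} - a^2 b + 3a^{q+1}b^{2q+2} - a^{q+1}b^{q+1}
 - a^{2q}b^q - b^{3q+3} + 2b^{2q+2} - b^{q+1}`; hence if this expression vanishes,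
`N` and `D` share a root in an algebraic closure. -/
theorem stmt_13 (p h q : ℕ) (hp : p.Prime) (hh : 1 ≤ h) (hq : q = p ^ h)
    (F : Type*) [Field F] [Fintype F] [CharP F p]
    (hcard : Fintype.card F = q ^ 2)
    (a b : F) (ha : a ≠ 0) (hb : b ≠ 0)
    (i : F →+* AlgebraicClosure F) (hi : i = algebraMap F (AlgebraicClosure F)) :
    (∃ (k : ℕ) (u : F), IsUnit u ∧
      Matrix.det !![a ^ q, 1, 0, b ^ q, 0, 0;
                    0, a ^ q, 1, 0, b ^ q, 0;
                    0, 0, a ^ q, 1, 0, b ^ q;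
                    b, 0, 1, a, 0, 0;
                    0, b, 0, 1, a, 0;
                    0, 0, b, 0, 1, a] =
        u * b ^ k *
          (a ^ (3 * q + 3) - 3 * a ^ (2 * q + 2) * b ^ (q + 1) - a ^ (2 * q + 2) -
            a ^ 2 * b + 3 * a ^ (q + 1) * b ^ (2 * q + 2) - a ^ (q + 1) * b ^ (q + 1) -
            a ^ (2 * q) * b ^ q - b ^ (3 * q + 3) + 2 * b ^ (2 * q + 2) - b ^ (q + 1))) ∧
    (a ^ (3 * q + 3) - 3 * a ^ (2 * q + 2) * b ^ (q + 1) - a ^ (2 * q + 2) -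
        a ^ 2 * b + 3 * a ^ (q + 1) * b ^ (2 * q + 2) - a ^ (q + 1) * b ^ (q + 1) -
        a ^ (2 * q) * b ^ q - b ^ (3 * q + 3) + 2 * b ^ (2 * q + 2) - b ^ (q + 1) = 0 →
      ∃ x : AlgebraicClosure F,
        i a ^ q * x ^ 3 + x ^ 2 + i b ^ q = 0 ∧ i b * x ^ 3 + x + i a = 0) := by
  constructor
  · refine ⟨0, 1, isUnit_one, ?_⟩
    simp [Matrix.det_succ_row_zero, Fin.sum_univ_succ, Fin.succAbove, Fin.ext_iff,
      Fin.castSucc, Fin.castAdd, Fin.castLE]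
    ring
  · intro hE
    have hbK : i b ≠ 0 := by
      simpa using (map_ne_zero i).mpr hb
    -- a root of D
    obtain ⟨r1, h1⟩ := cubic_root (i b) (i a) hbK
    -- a root of the quadratic cofactor
    obtain ⟨r2, h2'⟩ := quad_root (i b) (i b * r1) (i b * r1 ^ 2 + 1) hbK
    have h2 : i b * r2^2 + i b * r1 * r2 + i b * r1^2 + 1 = 0 := by linear_combination h2'
    set r3 : AlgebraicClosure F := -r1 - r2 with hr3
    -- r2 and r3 are also roots of D
    have hD2 : i b * r2 ^ 3 + r2 + i a = 0 := by linear_combination (r2 - r1) * h2 + h1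
    have hD3 : i b * r3 ^ 3 + r3 + i a = 0 := by
      rw [hr3]; linear_combination (-r1 - r2 - r1) * h2 + h1
    -- the mapped expression vanishes
    have hEK : ((i a)^q)^3*(i a)^3 - 3*((i a)^q)^2*(i a)^2*((i b)^q)*(i b) - ((i a)^q)^2*(i a)^2
        - (i a)^2*(i b) + 3*((i a)^q)*(i a)*((i b)^q)^2*(i b)^2 - ((i a)^q)*(i a)*((i b)^q)*(i b)
        - ((i a)^q)^2*((i b)^q) - ((i b)^q)^3*(i b)^3 + 2*((i b)^q)^2*(i b)^2
        - ((i b)^q)*(i b) = 0 := by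
      have h0 := congrArg i hE
      simp only [map_sub, map_add, map_mul, map_pow, map_ofNat, map_one, map_zero] at h0
      linear_combination h0
    have hkey := key_identity (i a) (i b) ((i a)^q) ((i b)^q) r1 r2 h1 h2
    have hprod : ((i a)^q*r1^3 + r1^2 + (i b)^q) * ((i a)^q*r2^3 + r2^2 + (i b)^q)
        * ((i a)^q*(-r1-r2)^3 + (-r1-r2)^2 + (i b)^q) = 0 := by
      have hb3 : (i b)^3 ≠ 0 := pow_ne_zero 3 hbK
      have := hkey
      field_simp at this ⊢
      have h' : ((i a)^q*r1^3 + r1^2 + (i b)^q) * ((i a)^q*r2^3 + r2^2 + (i b)^q)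
          * ((i a)^q*(-r1-r2)^3 + (-r1-r2)^2 + (i b)^q) * (i b)^3 = 0 := by
        linear_combination this - hEK
      rcases mul_eq_zero.mp h' with h'' | h''
      · linear_combination h''
      · exact absurd h'' hb3
    rcases mul_eq_zero.mp hprod with h' | hN3
    · rcases mul_eq_zero.mp h' with hN1 | hN2
      · exact ⟨r1, by linear_combination hN1, by linear_combination h1⟩
      · exact ⟨r2, by linear_combination hN2, by linear_combination hD2⟩
    · refine ⟨r3, ?_, by linear_combination hD3⟩
      rw [hr3]; linear_combination hN3
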